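/- Let r_g and r be real numbers with 0 < r_g < r. Then the series Σ_{k=1}^{∞} (C_k/k)·(1 − (r_g/r)^k), with C_k = (2k choose k)/4^k, converges and its sum equals ∫_{r_g}^{r} (1/√(1 − r_g/x) − 1)/x dx. -/

import Mathlib

open MeasureTheory Real Finset

namespace SchwarzschildAux

noncomputable def c (k : ℕ) : ℝ := (Nat.centralBinom k : ℝ) / 4 ^ k
lemma c_zero : c 0 = 1 := by simp [c, Nat.centralBinom]
lemma c_pos (k : ℕ) : 0 < c k := by
  have h1 : (0:ℝ) < Nat.centralBinom k := by exact_mod_cast Nat.centralBinom_pos k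
  exact div_pos h1 (by positivity)
lemma c_rec (k : ℕ) : ((k : ℝ) + 1) * c (k + 1) = ((k : ℝ) + 1/2) * c k := by
  have h' : ((k:ℝ)+1) * (Nat.centralBinom (k+1) : ℝ) = 2 * (2*(k:ℝ)+1) * (Nat.centralBinom k : ℝ) := by
    exact_mod_cast congrArg (Nat.cast : ℕ → ℝ) (Nat.succ_mul_centralBinom_succ k)
  simp only [c]; field_simp
  linear_combination (2 * (4:ℝ)^k) * h'

lemma c_sq (k : ℕ) : c k ^ 2 * (2*(k:ℝ)+1) ≤ 1 := by
  induction k with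
  | zero => simp [c_zero]
  | succ k ih =>
    have hr := c_rec k
    have hk : (0:ℝ) < (k:ℝ) + 1 := by positivity
    have hc : c (k+1) = ((k:ℝ) + 1/2)/((k:ℝ)+1) * c k := by
      field_simp; linarith
    rw [hc]
    have hck := (c_pos k).le
    push_cast
    rw [mul_pow, div_pow]
    rw [div_mul_eq_mul_div, div_mul_eq_mul_div, div_le_one (by positivity)]
    nlinarith [sq_nonneg (c k), c_pos k]

lemma c_le_one (k : ℕ) : c k ≤ 1 := by
  nlinarith [c_sq k, c_pos k, Nat.cast_nonneg (α := ℝ) k]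

lemma key (m : ℕ) : 2 * (∑ i ∈ range (m+1), (i:ℝ) * (c i * c (m-i)))
    = (m:ℝ) * ∑ i ∈ range (m+1), c i * c (m-i) := by
  have h1 : ∑ i ∈ range (m+1), (i:ℝ) * (c i * c (m-i))
      = ∑ i ∈ range (m+1), ((m:ℝ) - i) * (c i * c (m-i)) := by
    rw [← Finset.sum_range_reflect (fun i => (i:ℝ) * (c i * c (m-i))) (m+1)]
    apply Finset.sum_congr rfl
    intro i hi
    have hi' : i ≤ m := Nat.lt_succ_iff.mp (Finset.mem_range.mp hi)
    simp only [Nat.add_sub_cancel]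
    rw [Nat.sub_sub_self hi', Nat.cast_sub hi']
    ring
  calc 2 * (∑ i ∈ range (m+1), (i:ℝ) * (c i * c (m-i)))
      = (∑ i ∈ range (m+1), (i:ℝ) * (c i * c (m-i)))
        + ∑ i ∈ range (m+1), ((m:ℝ) - i) * (c i * c (m-i)) := by rw [← h1]; ring
    _ = (m:ℝ) * ∑ i ∈ range (m+1), c i * c (m-i) := by
        rw [← Finset.sum_add_distrib, Finset.mul_sum]
        apply Finset.sum_congr rfl
        intro i _; ring

lemma conv (n : ℕ) : ∑ i ∈ range (n+1), c i * c (n-i) = 1 := by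
  induction n with
  | zero => simp [c_zero]
  | succ n ih =>
    have hpos : (0:ℝ) < (n:ℝ) + 1 := by positivity
    have step : ((n:ℝ)+1) * (∑ i ∈ range (n+2), c i * c (n+1-i))
        = ((n:ℝ)+1) * ∑ i ∈ range (n+1), c i * c (n-i) := by
      have e1 : ((n:ℝ)+1) * (∑ i ∈ range (n+2), c i * c (n+1-i))
          = 2 * ∑ i ∈ range (n+2), (i:ℝ) * (c i * c (n+1-i)) := by
        rw [key (n+1)]; push_cast; ring_nf
      have e2 : ∑ i ∈ range (n+2), (i:ℝ) * (c i * c (n+1-i))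
          = ∑ i ∈ range (n+1), ((i:ℝ)+1) * (c (i+1) * c (n-i)) := by
        rw [Finset.sum_range_succ' (fun i => (i:ℝ) * (c i * c (n+1-i))) (n+1)]
        simp
      have e3 : ∑ i ∈ range (n+1), ((i:ℝ)+1) * (c (i+1) * c (n-i))
          = ∑ i ∈ range (n+1), ((i:ℝ)+1/2) * (c i * c (n-i)) := by
        apply Finset.sum_congr rfl
        intro i _
        rw [← mul_assoc, c_rec i, mul_assoc]
      have e4 : 2 * ∑ i ∈ range (n+1), ((i:ℝ)+1/2) * (c i * c (n-i))
          = 2 * (∑ i ∈ range (n+1), (i:ℝ) * (c i * c (n-i)))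
            + ∑ i ∈ range (n+1), c i * c (n-i) := by
        rw [Finset.mul_sum, Finset.mul_sum, ← Finset.sum_add_distrib]
        apply Finset.sum_congr rfl
        intro i _; ring
      rw [e1, e2, e3, e4, key n]
      ring
    have := mul_left_cancel₀ (ne_of_gt hpos) step
    rw [this, ih]


lemma summable_c {ξ : ℝ} (h0 : 0 ≤ ξ) (h1 : ξ < 1) : Summable (fun k => c k * ξ ^ k) := by
  apply Summable.of_nonneg_of_le (fun k => mul_nonneg (c_pos k).le (pow_nonneg h0 k))
    (fun k => mul_le_of_le_one_left (pow_nonneg h0 k) (c_le_one k))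
  exact summable_geometric_of_lt_one h0 h1

lemma hasSum_c {ξ : ℝ} (h0 : 0 ≤ ξ) (h1 : ξ < 1) :
    HasSum (fun k => c k * ξ ^ k) ((Real.sqrt (1 - ξ))⁻¹) := by
  have hs := summable_c h0 h1
  have hnorm : Summable (fun k => ‖c k * ξ ^ k‖) := by
    apply hs.congr
    intro k
    rw [Real.norm_of_nonneg (mul_nonneg (c_pos k).le (pow_nonneg h0 k))]
  have hmul := tsum_mul_tsum_eq_tsum_sum_range_of_summable_norm hnorm hnorm
  set S := ∑' k, c k * ξ ^ k with hS
  have hgeo : ∀ n, ∑ k ∈ range (n+1), (c k * ξ ^ k) * (c (n-k) * ξ ^ (n-k)) = ξ ^ n := by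
    intro n
    have : ∀ k ∈ range (n+1), (c k * ξ ^ k) * (c (n-k) * ξ ^ (n-k)) = (c k * c (n-k)) * ξ ^ n := by
      intro k hk
      have hk' : k ≤ n := Nat.lt_succ_iff.mp (Finset.mem_range.mp hk)
      rw [show (c k * ξ ^ k) * (c (n-k) * ξ ^ (n-k)) = (c k * c (n-k)) * (ξ ^ k * ξ ^ (n-k)) by ring,
        ← pow_add, Nat.add_sub_cancel' hk']
    rw [Finset.sum_congr rfl this, ← Finset.sum_mul, conv n, one_mul]
  have hsq : S * S = (1 - ξ)⁻¹ := by
    rw [hmul]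
    have : ∀ n : ℕ, ∑ k ∈ range (n+1), (c k * ξ ^ k) * (c (n-k) * ξ ^ (n-k)) = ξ ^ n := hgeo
    calc (∑' n : ℕ, ∑ k ∈ range (n+1), (c k * ξ ^ k) * (c (n-k) * ξ ^ (n-k)))
        = ∑' n : ℕ, ξ ^ n := by exact tsum_congr this
      _ = (1 - ξ)⁻¹ := tsum_geometric_of_lt_one h0 h1
  have hSnn : 0 ≤ S := tsum_nonneg (fun k => mul_nonneg (c_pos k).le (pow_nonneg h0 k))
  have hfinal : S = (Real.sqrt (1 - ξ))⁻¹ := by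
    have : S = Real.sqrt (S * S) := (Real.sqrt_mul_self hSnn).symm
    rw [this, hsq, Real.sqrt_inv]
  rw [← hfinal]
  exact hs.hasSum

end SchwarzschildAux

open SchwarzschildAux

/-- Series representation of the Schwarzschild isotropic-map integral:
Σ_{k≥1} (C_k/k)(1 − (r_g/r)^k) = ∫_{r_g}^{r} (1/√(1 − r_g/x) − 1)/x dx,
where C_k = (2k choose k)/4^k. -/
theorem schwarzschild_isotropic_integral_series (r_g r : ℝ) (h0 : 0 < r_g) (h : r_g < r) :
    HasSum (fun k : ℕ =>
        ((Nat.choose (2 * (k + 1)) (k + 1) : ℝ) / 4 ^ (k + 1)) / (k + 1)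
          * (1 - (r_g / r) ^ (k + 1)))
      (∫ x in r_g..r, (1 / Real.sqrt (1 - r_g / x) - 1) / x) := by
  have hr : 0 < r := h0.trans h
  set F : ℕ → ℝ → ℝ := fun k x => c (k+1) * (r_g ^ (k+1) * (x⁻¹) ^ (k+2)) with hF
  -- pointwise series representation on Ioc
  have hxmem : ∀ x ∈ Set.Ioc r_g r, HasSum (fun k => F k x)
      ((1 / Real.sqrt (1 - r_g / x) - 1) / x) := by
    intro x hx
    have hx0 : 0 < x := h0.trans hx.1
    have hξ0 : 0 ≤ r_g / x := by positivity
    have hξ1 : r_g / x < 1 := (div_lt_one hx0).2 hx.1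
    have h2 := ((hasSum_nat_add_iff' 1).2 (hasSum_c hξ0 hξ1)).div_const x
    have hxne : x ≠ 0 := hx0.ne'
    have hfe : (fun n : ℕ => (c (n+1) * (r_g/x) ^ (n+1)) / x) = fun k => F k x := by
      funext k
      simp only [hF, div_pow, inv_pow]
      rw [mul_div_assoc, div_div, ← pow_succ, div_eq_mul_inv]
    rw [hfe] at h2
    convert h2 using 1
    · rfl
    simp [c_zero, one_div]
  -- integrability
  have hcont : ∀ k, ContinuousOn (F k) (Set.Icc r_g r) := by
    intro k
    exact continuousOn_const.mul (continuousOn_const.mul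
      ((continuousOn_id.inv₀ fun x hx => (h0.trans_le hx.1).ne').pow _))
  have hInt : ∀ k, Integrable (F k) (volume.restrict (Set.Ioc r_g r)) := fun k =>
    ((hcont k).integrableOn_Icc).mono_set Set.Ioc_subset_Icc_self
  have hFnn : ∀ k, ∀ x ∈ Set.Ioc r_g r, 0 ≤ F k x := by
    intro k x hx
    have hx0 : 0 < x := h0.trans hx.1
    have := (c_pos (k+1)).le
    positivity
  -- value of each integral
  have hI : ∀ k : ℕ, ∫ x in Set.Ioc r_g r, F k x
      = c (k+1) / (k+1) * (1 - (r_g/r) ^ (k+1)) := by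
    intro k
    have h0uIcc : (0:ℝ) ∉ Set.uIcc r_g r := by
      rw [Set.uIcc_of_le h.le]
      intro hmem
      exact absurd hmem.1 (not_le.2 h0)
    rw [← intervalIntegral.integral_of_le h.le]
    have hfe : ∀ x ∈ Set.uIcc r_g r, F k x = (c (k+1) * r_g ^ (k+1)) * x ^ (-((k+2:ℕ)):ℤ) := by
      intro x hx
      rw [zpow_neg, zpow_natCast, ← inv_pow, hF, mul_assoc]
    rw [intervalIntegral.integral_congr (fun x hx => hfe x hx)]
    rw [intervalIntegral.integral_const_mul, integral_zpow (Or.inr ⟨by omega, h0uIcc⟩)]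
    have he : (-((k+2:ℕ)):ℤ) + 1 = -((k+1:ℕ):ℤ) := by push_cast; ring
    rw [he]
    simp only [zpow_neg, zpow_natCast]
    have hd : ((-(((k:ℕ)+2:ℕ):ℤ) : ℤ) : ℝ) + 1 = -((k:ℝ)+1) := by push_cast; ring
    have hrne : (r:ℝ) ≠ 0 := hr.ne'
    have hrgne : r_g ≠ 0 := h0.ne'
    have hkne : ((k:ℝ)+1) ≠ 0 := by positivity
    have hrp : (r:ℝ) ^ (k+1) ≠ 0 := pow_ne_zero _ hrne
    have hrgp : r_g ^ (k+1) ≠ 0 := pow_ne_zero _ hrgne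
    rw [hd, div_pow]
    rw [div_neg, mul_neg, neg_eq_iff_eq_neg]
    field_simp
    ring
  -- summability of the integrals
  have hble : ∀ k : ℕ, c (k+1) / (k+1) * (1 - (r_g/r) ^ (k+1)) ≤ ((k:ℝ)+1) ^ (-(3/2) : ℝ) := by
    intro k
    have hK : (0:ℝ) < (k:ℝ)+1 := by positivity
    have hq : 0 < r_g / r := by positivity
    have hq1 : r_g / r < 1 := (div_lt_one hr).2 h
    have hfac0 : 0 ≤ 1 - (r_g/r) ^ (k+1) := by
      have : (r_g/r) ^ (k+1) ≤ 1 := pow_le_one₀ hq.le hq1.le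
      linarith
    have hfac1 : 1 - (r_g/r) ^ (k+1) ≤ 1 := by
      have : 0 ≤ (r_g/r) ^ (k+1) := by positivity
      linarith
    have hcK : c (k+1) ≤ (Real.sqrt ((k:ℝ)+1))⁻¹ := by
      rw [← Real.sqrt_inv]
      rw [Real.le_sqrt (c_pos _).le (by positivity)]
      have h1 := c_sq (k+1)
      push_cast at h1
      rw [← one_div, le_div_iff₀ hK]
      nlinarith [sq_nonneg (c (k+1))]
    have hrpow : ((k:ℝ)+1) ^ (-(3/2) : ℝ) = (Real.sqrt ((k:ℝ)+1))⁻¹ / ((k:ℝ)+1) := by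
      rw [show (-(3/2):ℝ) = (-(1/2)) + (-1) by norm_num, Real.rpow_add hK,
        Real.rpow_neg_one, Real.rpow_neg hK.le, ← Real.sqrt_eq_rpow]
      rw [div_eq_mul_inv]
    rw [hrpow]
    calc c (k+1) / ((k:ℝ)+1) * (1 - (r_g/r) ^ (k+1))
        ≤ c (k+1) / ((k:ℝ)+1) * 1 :=
          mul_le_mul_of_nonneg_left hfac1 (div_nonneg (c_pos _).le hK.le)
      _ = c (k+1) / ((k:ℝ)+1) := mul_one _
      _ ≤ (Real.sqrt ((k:ℝ)+1))⁻¹ / ((k:ℝ)+1) := by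
          exact (div_le_div_iff_of_pos_right hK).2 hcK
  -- summability
  have hsum : Summable (fun k : ℕ => c (k+1) / (k+1) * (1 - (r_g/r) ^ (k+1))) := by
    have hs32 : Summable (fun n : ℕ => 1 / (n:ℝ) ^ ((3/2):ℝ)) :=
      Real.summable_one_div_nat_rpow.2 (by norm_num)
    have hs' : Summable (fun n : ℕ => ((n:ℝ)+1) ^ (-(3/2) : ℝ)) := by
      have := (summable_nat_add_iff 1).2 hs32
      apply this.congr
      intro n
      have hn : (0:ℝ) < (n:ℝ)+1 := by positivity
      rw [Real.rpow_neg hn.le]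
      push_cast
      rw [one_div]
    apply Summable.of_nonneg_of_le ?_ hble hs'
    intro k
    have hq : 0 < r_g / r := by positivity
    have hq1 : r_g / r < 1 := (div_lt_one hr).2 h
    have hfac0 : 0 ≤ 1 - (r_g/r) ^ (k+1) := by
      have : (r_g/r) ^ (k+1) ≤ 1 := pow_le_one₀ hq.le hq1.le
      linarith
    have hK : (0:ℝ) < (k:ℝ)+1 := by positivity
    exact mul_nonneg (div_nonneg (c_pos _).le hK.le) hfac0
  -- norm integrals
  have hnorm : ∀ k : ℕ, ∫ x in Set.Ioc r_g r, ‖F k x‖ = c (k+1) / (k+1) * (1 - (r_g/r) ^ (k+1)) := by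
    intro k
    rw [← hI k]
    apply setIntegral_congr_fun measurableSet_Ioc
    intro x hx
    exact Real.norm_of_nonneg (hFnn k x hx)
  -- assemble
  have hmain := MeasureTheory.hasSum_integral_of_summable_integral_norm (μ := volume.restrict (Set.Ioc r_g r)) hInt
    (by rw [funext hnorm]; exact hsum)
  have hfun : (fun k : ℕ => ((Nat.choose (2 * (k + 1)) (k + 1) : ℝ) / 4 ^ (k + 1)) / (k + 1)
      * (1 - (r_g / r) ^ (k + 1))) = fun k => ∫ x in Set.Ioc r_g r, F k x := by
    funext k
    rw [hI k]
    simp only [c, Nat.centralBinom]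
  have hval : (∫ x in r_g..r, (1 / Real.sqrt (1 - r_g / x) - 1) / x)
      = ∫ x in Set.Ioc r_g r, ∑' k, F k x := by
    rw [intervalIntegral.integral_of_le h.le]
    apply setIntegral_congr_fun measurableSet_Ioc
    intro x hx
    exact ((hxmem x hx).tsum_eq).symm
  rw [hfun, hval]
  exact hmain
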